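/- The generating function Sav_{312}(z) = Σ_{n≥0} Sav_n(312) zⁿ satisfies Sav_{312}(z) = (-z³+z²+z-1)/(z⁴-2z³+z²+2z-1); equivalently, the sequence Sav_n(312) satisfies the linear recurrence determined by this rational function, with initial values 1, 1, 2, 4, 9, 19, 41 for n = 0,...,6. -/

import Mathlib

def Avoids312 {n : ℕ} (p : Equiv.Perm (Fin n)) : Prop :=
  ¬ ∃ a b c : Fin n, a < b ∧ b < c ∧ p b < p c ∧ p c < p a

def StronglyAvoids312 {n : ℕ} (p : Equiv.Perm (Fin n)) : Prop :=
  Avoids312 p ∧ Avoids312 (p * p)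

noncomputable def Sav312 (n : ℕ) : ℕ :=
  Nat.card {p : Equiv.Perm (Fin n) // StronglyAvoids312 p}

namespace SavAux

/-- Build a permutation of `Fin n` from ℕ-valued data. -/
def mkPerm (n : ℕ) (f g : ℕ → ℕ) (hf : ∀ i, i < n → f i < n) (hg : ∀ i, i < n → g i < n)
    (hgf : ∀ i, i < n → g (f i) = i) (hfg : ∀ i, i < n → f (g i) = i) :
    Equiv.Perm (Fin n) where
  toFun i := ⟨f i, hf i i.2⟩
  invFun i := ⟨g i, hg i i.2⟩
  left_inv i := Fin.ext (hgf i i.2)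
  right_inv i := Fin.ext (hfg i i.2)

@[simp] lemma mkPerm_apply (n f g hf hg hgf hfg) (i : Fin n) :
    ((mkPerm n f g hf hg hgf hfg i : Fin n) : ℕ) = f i := rfl

/-- avoidance in ℕ terms -/
lemma avoids_iff {n : ℕ} (p : Equiv.Perm (Fin n)) :
    Avoids312 p ↔ ∀ a b c : Fin n, (a:ℕ) < b → (b:ℕ) < c →
      (p b : ℕ) < p c → (p c : ℕ) < p a → False := by
  unfold Avoids312
  constructor
  · intro h a b c h1 h2 h3 h4
    exact h ⟨a, b, c, h1, h2, h3, h4⟩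
  · rintro h ⟨a, b, c, h1, h2, h3, h4⟩
    exact h a b c h1 h2 h3 h4

/-! ### The block permutations -/

/-- forward map of the block permutation `(k, k+1, …, k+j-1, k-1, k-2, …, 1, 0)` -/
def bf (j k : ℕ) : ℕ → ℕ := fun i => if i < j then k + i else j + k - 1 - i

def bg (j k : ℕ) : ℕ → ℕ := fun v => if v < k then j + k - 1 - v else v - k

def blockPerm (j k : ℕ) : Equiv.Perm (Fin (j + k)) :=
  mkPerm (j + k) (bf j k) (bg j k)
    (fun i hi => by unfold bf; split_ifs <;> omega)
    (fun i hi => by unfold bg; split_ifs <;> omega)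
    (fun i hi => by unfold bf bg; split_ifs <;> omega)
    (fun i hi => by unfold bf bg; split_ifs <;> omega)

@[simp] lemma blockPerm_apply {j k : ℕ} (i : Fin (j + k)) :
    ((blockPerm j k) i : ℕ) = bf j k i := rfl

@[simp] lemma blockPerm_sq_apply {j k : ℕ} (i : Fin (j + k)) :
    (((blockPerm j k) * (blockPerm j k)) i : ℕ) = bf j k (bf j k i) := rfl

lemma bf_bf {j k : ℕ} (h : j ≤ k ∨ (j = 1 ∧ k = 0)) {i : ℕ} (hi : i < j + k) :
    bf j k (bf j k i) = if i < j then j - 1 - i else if i < k then i else j + 2 * k - 1 - i := by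
  unfold bf; split_ifs <;> omega

lemma blockPerm_avoids {j k : ℕ} : Avoids312 (blockPerm j k) := by
  rw [avoids_iff]
  intro a b c h1 h2 h3 h4
  simp only [blockPerm_apply] at h3 h4
  have ha := a.2; have hb := b.2; have hc := c.2
  unfold bf at h3 h4; split_ifs at h3 h4 <;> omega

lemma blockPerm_sq_avoids {j k : ℕ} (h : j ≤ k ∨ (j = 1 ∧ k = 0)) :
    Avoids312 ((blockPerm j k) * (blockPerm j k)) := by
  rw [avoids_iff]
  intro a b c h1 h2 h3 h4
  simp only [blockPerm_sq_apply] at h3 h4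
  have ha := a.2; have hb := b.2; have hc := c.2
  rw [bf_bf h a.2, bf_bf h b.2, bf_bf h c.2] at *
  split_ifs at h3 h4 <;> omega

lemma blockPerm_SA {j k : ℕ} (h : j ≤ k ∨ (j = 1 ∧ k = 0)) :
    StronglyAvoids312 (blockPerm j k) :=
  ⟨blockPerm_avoids, blockPerm_sq_avoids h⟩

lemma blockPerm_last {j k : ℕ} (hj : 1 ≤ j) (h : j ≤ k ∨ (j = 1 ∧ k = 0)) {i : Fin (j + k)}
    (hi : (i : ℕ) = j + k - 1) : ((blockPerm j k) i : ℕ) = 0 := by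
  simp only [blockPerm_apply]; unfold bf; rw [hi]; split_ifs <;> omega

/-! ### Classification of strongly avoiding permutations ending in 0 -/

theorem classify_nat (m : ℕ) (hm : 1 ≤ m) (Q Qinv : ℕ → ℕ)
    (hlt : ∀ i, i < m → Q i < m)
    (hinj : ∀ i j, i < m → j < m → Q i = Q j → i = j)
    (hQi : ∀ v, v < m → Qinv v < m ∧ Q (Qinv v) = v)
    (hav : ∀ a b c, a < b → b < c → c < m → Q b < Q c → Q c < Q a → False)
    (hav2 : ∀ a b c, a < b → b < c → c < m → Q (Q b) < Q (Q c) → Q (Q c) < Q (Q a) → False)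
    (h0 : Q (m-1) = 0) :
    ∃ j k, j + k = m ∧ 1 ≤ j ∧ (j ≤ k ∨ (j = 1 ∧ k = 0)) ∧ ∀ i, i < m → Q i = bf j k i := by
  rcases eq_or_lt_of_le hm with hm1 | hm2
  · refine ⟨1, 0, by omega, le_refl 1, Or.inr ⟨rfl, rfl⟩, ?_⟩
    intro i hi
    have hi0 : i = 0 := by omega
    subst hi0
    have h1 := h0; rw [show m - 1 = 0 by omega] at h1
    rw [h1]; rfl
  -- m ≥ 2
  have hQ0 : Q 0 < m := hlt 0 (by omega)
  have hk1 : 1 ≤ Q 0 := by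
    by_contra h
    have h2 : Q 0 = Q (m-1) := by omega
    have := hinj 0 (m-1) (by omega) (by omega) h2
    omega
  have factA : ∀ b c, 0 < b → b < c → c < m → Q b < Q c → Q 0 ≤ Q c := by
    intro b c hb hbc hc hQ
    by_contra h
    exact hav 0 b c hb hbc hc hQ (by omega)
  have hQQm1 : Q (Q (m-1)) = Q 0 := by rw [h0]
  -- Step C1 : suffix determined
  have C1 : ∀ v, v < Q 0 → Q (m-1-v) = v := by
    intro v
    induction v using Nat.strong_induction_on with
    | _ v IH =>
    intro hvk
    by_contra hne
    have hv1 : 1 ≤ v := by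
      by_contra h
      have h2 : v = 0 := by omega
      apply hne; rw [h2, Nat.sub_zero, h0]
    -- tail facts
    have tail : ∀ z, m-1-v < z → z < m → Q z = m-1-z := by
      intro z hz hzm
      have h3 := IH (m-1-z) (by omega) (by omega)
      rw [show m-1-(m-1-z) = z by omega] at h3
      exact h3
    obtain ⟨y, hym, hQy⟩ : ∃ y, y < m ∧ Q y = v :=
      ⟨Qinv v, (hQi v (by omega)).1, (hQi v (by omega)).2⟩
    have hye : y < m-1-v := by
      rcases lt_trichotomy y (m-1-v) with h | h | h
      · exact h
      · exfalso; apply hne; rw [← h]; exact hQy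
      · exfalso; have h4 := tail y h hym; omega
    have hy1 : 1 ≤ y := by
      by_contra h
      have h2 : y = 0 := by omega
      rw [h2] at hQy; omega
    have hWm : Q (m-1-v) < m := hlt _ (by omega)
    have hWk : Q 0 < Q (m-1-v) := by
      have h1 : ¬ Q (m-1-v) < v := by
        intro h
        have h2 := IH (Q (m-1-v)) h (by omega)
        have h3 := hinj (m-1-v) (m-1-(Q (m-1-v))) (by omega) (by omega) h2.symm
        omega
      have h3 : Q 0 ≤ Q (m-1-v) := factA y (m-1-v) hy1 hye (by omega) (by omega)
      have h4 : Q (m-1-v) ≠ Q 0 := by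
        intro h
        have := hinj (m-1-v) 0 (by omega) (by omega) h
        omega
      omega
    rcases lt_or_ge (m-1-v) v with hve | hve
    · -- case v > e : witness (v, m-1-y, m-1) in q²
      have hQv : Q v = m-1-v := by
        have h3 := IH (m-1-v) hve (by omega)
        rwa [show m-1-(m-1-v) = v by omega] at h3
      have hQmy : Q (m-1-y) = y := IH y (by omega) (by omega)
      apply hav2 v (m-1-y) (m-1) (by omega) (by omega) (by omega)
      · rw [hQmy, hQy, hQQm1]; omega
      · rw [hQQm1, hQv]; omega
    · -- case v ≤ e
      obtain ⟨P, hPm, hQP⟩ : ∃ P, P < m ∧ Q P = m - 1 :=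
        ⟨Qinv (m-1), (hQi (m-1) (by omega)).1, (hQi (m-1) (by omega)).2⟩
      have hPe : P ≤ m-1-v := by
        by_contra h
        have := tail P (by omega) hPm
        omega
      have hPne : P ≠ m - 1 := by intro h; rw [h, h0] at hQP; omega
      rcases eq_or_lt_of_le hPe with hPeq | hPlt
      · -- subcase P = e
        have hQe : Q (m-1-v) = m - 1 := by rw [← hPeq]; exact hQP
        have hkm1 : Q 0 < m - 1 := by
          by_contra h
          have h2 : Q 0 = m-1 := by omega
          have := hinj 0 (m-1-v) (by omega) (by omega) (by rw [h2, hQe])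
          omega
        rcases eq_or_lt_of_le hve with hveq | hvlt
        · -- v = e : witness (y, e, m-1)
          apply hav2 y (m-1-v) (m-1) hye (by omega) (by omega)
          · rw [hQe, h0]; omega
          · rw [hQQm1, hQy, hveq, hQe]; omega
        · -- v < e : A := position of value e
          obtain ⟨A, hAm, hQA⟩ : ∃ A, A < m ∧ Q A = m-1-v :=
            ⟨Qinv (m-1-v), (hQi (m-1-v) (by omega)).1, (hQi (m-1-v) (by omega)).2⟩
          have hAe : A < m-1-v := by
            rcases lt_trichotomy A (m-1-v) with h | h | h
            · exact h
            · exfalso; rw [h, hQe] at hQA; omega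
            · exfalso; have := tail A h hAm; omega
          apply hav2 A (m-1-v) (m-1) hAe (by omega) (by omega)
          · rw [hQe, h0]; omega
          · rw [hQQm1, hQA, hQe]; omega
      · -- subcase P < e
        have hWm1 : Q (m-1-v) < m - 1 := by
          by_contra h
          have h2 : Q (m-1-v) = Q P := by omega
          have := hinj (m-1-v) P (by omega) (by omega) h2
          omega
        rcases lt_trichotomy P y with h | h | h
        · exact hav P y (m-1-v) h hye (by omega) (by omega) (by omega)
        · exfalso; rw [← h] at hQy; omega
        · -- y < P
          by_cases hex : ∃ x, x < P ∧ Q 0 < Q (Q x)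
          · obtain ⟨x, hx, hQQx⟩ := hex
            apply hav2 x P (m-1) hx (by omega) (by omega)
            · rw [hQP, h0]; omega
            · rw [hQQm1]; omega
          · push_neg at hex
            have big : ∀ b', P < b' → b' ≤ m-1-v → Q 0 < Q b' := by
              intro b' h1 h2
              rcases eq_or_lt_of_le h2 with h3 | h3
              · rw [h3]; omega
              · by_contra h4
                exact hav P b' (m-1-v) h1 h3 (by omega) (by omega) (by omega)
            have hP1 : 1 ≤ P := by omega
            have hkm1 : Q 0 < m - 1 := by
              by_contra h
              have h2 : Q 0 = m-1 := by omega
              have := hinj 0 P (by omega) (by omega) (by rw [h2, hQP])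
              omega
            have hvP : v < P := by
              by_contra h4
              push_neg at h4
              have h5 : Q 0 < Q v := by
                rcases eq_or_lt_of_le h4 with h6 | h6
                · rw [← h6, hQP]; omega
                · exact big v h6 hve
              have h7 := hex y h
              rw [hQy] at h7
              omega
            have loc : ∀ u, P ≤ u → u ≤ m-1-v → P < Qinv u ∧ Qinv u ≤ m-1-v := by
              intro u h1 h2
              obtain ⟨hzm, hQz⟩ := hQi u (by omega)
              have hzP : ¬ Qinv u < P := by
                intro h3
                have h5 : Q 0 < Q u := by
                  rcases eq_or_lt_of_le h1 with h6 | h6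
                  · rw [← h6, hQP]; omega
                  · exact big u h6 h2
                have h7 := hex (Qinv u) h3
                rw [hQz] at h7
                omega
              have hzP2 : Qinv u ≠ P := by
                intro h3; rw [h3, hQP] at hQz; omega
              have hze : ¬ m-1-v < Qinv u := by
                intro h3
                have := tail (Qinv u) h3 hzm
                omega
              omega
            have hcard : (Finset.Icc P (m-1-v)).card ≤ (Finset.Ioc P (m-1-v)).card := by
              apply Finset.card_le_card_of_injOn Qinv
              · intro u hu
                simp only [Finset.mem_coe, Finset.mem_Icc] at hu
                have := loc u hu.1 hu.2
                simp only [Finset.mem_coe, Finset.mem_Ioc]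
                exact this
              · intro u hu u' hu' h3
                simp only [Finset.coe_Icc, Set.mem_Icc] at hu hu'
                have e1 := (hQi u (by omega)).2
                have e2 := (hQi u' (by omega)).2
                rw [h3] at e1
                omega
            rw [Nat.card_Icc, Nat.card_Ioc] at hcard
            omega
  -- consequences of C1
  have suffix : ∀ x, m - Q 0 ≤ x → x < m → Q x = m-1-x := by
    intro x h1 h2
    have h3 := C1 (m-1-x) (by omega)
    rwa [show m-1-(m-1-x) = x by omega] at h3
  have bigs : ∀ x, x < m - Q 0 → Q 0 ≤ Q x := by
    intro x hx
    by_contra h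
    push_neg at h
    have h2 := C1 (Q x) h
    have h3 := hinj x (m-1-Q x) (by omega) (by omega) h2.symm
    omega
  have hbig : ∀ b, 0 < b → b < m - Q 0 → Q 0 < Q b := by
    intro b h1 h2
    have h3 := bigs b h2
    rcases eq_or_lt_of_le h3 with h | h
    · exfalso; have := hinj 0 b (by omega) (by omega) h; omega
    · exact h
  -- F3 : j ≤ k
  have hjk : m - Q 0 ≤ Q 0 := by
    by_contra hc
    push_neg at hc
    have h1 : Q 0 ≤ Q (Q 0) := bigs (Q 0) hc
    have h2 : Q (Q 0) ≠ Q 0 := by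
      intro h
      have := hinj (Q 0) 0 (by omega) (by omega) (by rw [h])
      omega
    obtain ⟨P, hPm, hQP⟩ : ∃ P, P < m ∧ Q P = m-1 :=
      ⟨Qinv (m-1), (hQi _ (by omega)).1, (hQi _ (by omega)).2⟩
    have hPj : P < m - Q 0 := by
      by_contra h
      push_neg at h
      have := suffix P h hPm
      omega
    have hP0 : P ≠ 0 := by
      intro h; rw [h] at hQP; omega
    apply hav2 0 P (m-1) (by omega) (by omega) (by omega)
    · rw [hQP, h0]; omega
    · rw [hQQm1]; omega
  -- C2 : no inversions among the first j positions
  have noinv : ∀ d a b, a < b → b < m - Q 0 → Q b + d ≠ Q a := by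
    intro d
    induction d using Nat.strong_induction_on with
    | _ d IHd =>
    intro a b hab hbj hEq
    rcases Nat.eq_zero_or_pos d with hd0 | hd1
    · rw [hd0, Nat.add_zero] at hEq
      have := hinj b a (by omega) (by omega) hEq
      omega
    have hu : Q 0 < Q b := hbig b (by omega) hbj
    have hQam : Q a < m := hlt a (by omega)
    rcases eq_or_lt_of_le (show 1 ≤ d by omega) with hd1' | hd2
    · -- d = 1
      rw [← hd1'] at hEq
      have ha1 : 1 ≤ a := by
        by_contra h
        have h2 : a = 0 := by omega
        rw [h2] at hEq
        omega
      have hsb : Q (Q b) = m-1-Q b := suffix (Q b) (by omega) (by omega)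
      have hsa : Q (Q a) = m-1-Q a := suffix (Q a) (by omega) (by omega)
      have hs0 : Q (Q 0) = m-1-Q 0 := suffix (Q 0) (by omega) (by omega)
      apply hav2 0 a b ha1 hab (by omega)
      · rw [hsa, hsb]; omega
      · rw [hsb, hs0]; omega
    · -- d ≥ 2
      obtain ⟨x, hxm, hQx⟩ : ∃ x, x < m ∧ Q x = Q b + (d-1) :=
        ⟨Qinv (Q b + (d-1)), (hQi _ (by omega)).1, (hQi _ (by omega)).2⟩
      have hxj : x < m - Q 0 := by
        by_contra h
        push_neg at h
        have := suffix x h hxm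
        omega
      have hxa : x ≠ a := by intro h; rw [h, ← hEq] at hQx; omega
      have hxb : x ≠ b := by intro h; rw [h] at hQx; omega
      rcases lt_trichotomy x a with h | h | h
      · exact IHd (d-1) (by omega) x b (by omega) hbj (by omega)
      · exact hxa h
      · rcases lt_trichotomy x b with h2 | h2 | h2
        · exact IHd 1 (by omega) a x h (by omega) (by omega)
        · exact hxb h2
        · exact hav a b x hab h2 (by omega) (by omega) (by omega)
  have incr : ∀ a b, a < b → b < m - Q 0 → Q a < Q b := by
    intro a b hab hbj
    rcases lt_trichotomy (Q a) (Q b) with h | h | h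
    · exact h
    · exact absurd (noinv 0 a b hab hbj) (by omega)
    · exact absurd (noinv (Q a - Q b) a b hab hbj) (by omega)
  have mono2 : ∀ a b, a ≤ b → b < m - Q 0 → Q a + (b - a) ≤ Q b := by
    intro a b
    induction b with
    | zero =>
      intro h1 h2
      have h3 : a = 0 := by omega
      subst h3; omega
    | succ n IHn =>
      intro h1 h2
      rcases eq_or_lt_of_le h1 with h3 | h3
      · rw [h3]; omega
      · have h4 := IHn (by omega) (by omega)
        have h5 := incr n (n+1) (by omega) h2
        omega
  refine ⟨m - Q 0, Q 0, by omega, by omega, Or.inl hjk, ?_⟩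
  intro i hi
  unfold bf
  split_ifs with h
  · have h1 := mono2 0 i (by omega) h
    have h2 := mono2 i (m - Q 0 - 1) (by omega) (by omega)
    have h3 := hlt (m - Q 0 - 1) (by omega)
    omega
  · push_neg at h
    have := suffix i h hi
    omega

/-! ### ℕ-valued view of permutations -/

/-- evaluation of a permutation of `Fin n` as a function `ℕ → ℕ` (identity out of range). -/
def pext {n : ℕ} (p : Equiv.Perm (Fin n)) : ℕ → ℕ :=
  fun i => if h : i < n then (p ⟨i, h⟩ : ℕ) else i

lemma pext_lt {n : ℕ} (p : Equiv.Perm (Fin n)) {i : ℕ} (h : i < n) : pext p i < n := by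
  simp only [pext, dif_pos h]; exact (p ⟨i, h⟩).2

lemma pext_eq {n : ℕ} (p : Equiv.Perm (Fin n)) {i : ℕ} (h : i < n) :
    pext p i = (p ⟨i, h⟩ : ℕ) := by simp only [pext, dif_pos h]

lemma pext_apply {n : ℕ} (p : Equiv.Perm (Fin n)) (i : Fin n) :
    pext p i = (p i : ℕ) := by simp only [pext, dif_pos i.2]

lemma pext_symm_pext {n : ℕ} (p : Equiv.Perm (Fin n)) {i : ℕ} (h : i < n) :
    pext p.symm (pext p i) = i := by
  rw [pext_eq p h, pext_eq p.symm (p ⟨i, h⟩).2]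
  simp

lemma pext_pext_symm {n : ℕ} (p : Equiv.Perm (Fin n)) {i : ℕ} (h : i < n) :
    pext p (pext p.symm i) = i := by
  rw [pext_eq p.symm h, pext_eq p (p.symm ⟨i, h⟩).2]
  simp

lemma pext_inj {n : ℕ} (p : Equiv.Perm (Fin n)) {i j : ℕ} (hi : i < n) (hj : j < n)
    (h : pext p i = pext p j) : i = j := by
  have := congrArg (pext p.symm) h
  rwa [pext_symm_pext p hi, pext_symm_pext p hj] at this

lemma pext_mul {n : ℕ} (p q : Equiv.Perm (Fin n)) {i : ℕ} (h : i < n) :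
    pext (p * q) i = pext p (pext q i) := by
  rw [pext_eq q h, pext_eq (p * q) h, pext_eq p (q ⟨i, h⟩).2]
  rfl

lemma avoids_iff' {n : ℕ} (p : Equiv.Perm (Fin n)) :
    Avoids312 p ↔ ∀ a b c : ℕ, a < b → b < c → c < n →
      pext p b < pext p c → pext p c < pext p a → False := by
  rw [avoids_iff]
  constructor
  · intro h a b c h1 h2 h3 h4 h5
    rw [pext_eq p (show b < n by omega), pext_eq p h3] at h4
    rw [pext_eq p h3, pext_eq p (show a < n by omega)] at h5
    exact h ⟨a, by omega⟩ ⟨b, by omega⟩ ⟨c, h3⟩ h1 h2 h4 h5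
  · intro h a b c h1 h2 h3 h4
    refine h a b c h1 h2 c.2 ?_ ?_
    · rw [pext_apply p b, pext_apply p c]; exact h3
    · rw [pext_apply p c, pext_apply p a]; exact h4

lemma sq_avoids_iff' {n : ℕ} (p : Equiv.Perm (Fin n)) :
    Avoids312 (p * p) ↔ ∀ a b c : ℕ, a < b → b < c → c < n →
      pext p (pext p b) < pext p (pext p c) → pext p (pext p c) < pext p (pext p a) → False := by
  rw [avoids_iff' (p * p)]
  constructor
  · intro h a b c h1 h2 h3 h4 h5
    rw [← pext_mul p p (show b < n by omega), ← pext_mul p p h3] at h4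
    rw [← pext_mul p p h3, ← pext_mul p p (show a < n by omega)] at h5
    exact h a b c h1 h2 h3 h4 h5
  · intro h a b c h1 h2 h3 h4 h5
    rw [pext_mul p p (show b < n by omega), pext_mul p p h3] at h4
    rw [pext_mul p p h3, pext_mul p p (show a < n by omega)] at h5
    exact h a b c h1 h2 h3 h4 h5

/-! ### Glued permutations (direct sums) -/

def gluedPerm {a b n : ℕ} (hab : a + b = n) (q : Equiv.Perm (Fin a)) (r : Equiv.Perm (Fin b)) :
    Equiv.Perm (Fin n) :=
  mkPerm n (fun i => if i < a then pext q i else a + pext r (i - a))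
           (fun v => if v < a then pext q.symm v else a + pext r.symm (v - a))
    (fun i hi => by
      split_ifs with h
      · have := pext_lt q h; omega
      · have := pext_lt r (show i - a < b by omega); omega)
    (fun i hi => by
      split_ifs with h
      · have := pext_lt q.symm h; omega
      · have := pext_lt r.symm (show i - a < b by omega); omega)
    (fun i hi => by
      split_ifs with h h2 h2
      · exact pext_symm_pext q h
      · exact absurd (pext_lt q h) h2
      · have := pext_lt r (show i - a < b by omega); omega
      · rw [Nat.add_sub_cancel_left, pext_symm_pext r (show i - a < b by omega)]; omega)
    (fun i hi => by
      split_ifs with h h2 h2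
      · exact pext_pext_symm q h
      · exact absurd (pext_lt q.symm h) h2
      · have := pext_lt r.symm (show i - a < b by omega); omega
      · rw [Nat.add_sub_cancel_left, pext_pext_symm r (show i - a < b by omega)]; omega)

lemma gluedPerm_val {a b n : ℕ} (hab : a + b = n) (q : Equiv.Perm (Fin a))
    (r : Equiv.Perm (Fin b)) {i : ℕ} (hi : i < n) :
    pext (gluedPerm hab q r) i = if i < a then pext q i else a + pext r (i - a) := by
  rw [pext_eq _ hi]; rfl

lemma gluedPerm_mul {a b n : ℕ} (hab : a + b = n) (q q' : Equiv.Perm (Fin a))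
    (r r' : Equiv.Perm (Fin b)) :
    gluedPerm hab q r * gluedPerm hab q' r' = gluedPerm hab (q * q') (r * r') := by
  apply Equiv.ext
  intro i
  apply Fin.ext
  rw [← pext_apply, ← pext_apply, pext_mul _ _ i.2]
  rw [gluedPerm_val hab q' r' i.2]
  split_ifs with h
  · rw [gluedPerm_val hab q r (by have := pext_lt q' h; omega),
      gluedPerm_val hab (q * q') (r * r') i.2, if_pos (pext_lt q' h), if_pos h,
      pext_mul q q' h]
  · rw [gluedPerm_val hab q r (by have := pext_lt r' (show i - a < b by omega); omega),
      gluedPerm_val hab (q * q') (r * r') i.2, if_neg h,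
      if_neg (by omega), Nat.add_sub_cancel_left, pext_mul r r' (show i - a < b by omega)]

lemma gluedPerm_avoids {a b n : ℕ} (hab : a + b = n) (q : Equiv.Perm (Fin a))
    (r : Equiv.Perm (Fin b)) :
    Avoids312 (gluedPerm hab q r) ↔ Avoids312 q ∧ Avoids312 r := by
  rw [avoids_iff' q, avoids_iff' r, avoids_iff' (gluedPerm hab q r)]
  constructor
  · intro h
    constructor
    · intro x y z h1 h2 h3 h4 h5
      apply h x y z h1 h2 (by omega)
      · rw [gluedPerm_val hab q r (show y < n by omega), gluedPerm_val hab q r (show z < n by omega),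
          if_pos (show y < a by omega), if_pos h3]; exact h4
      · rw [gluedPerm_val hab q r (show x < n by omega), gluedPerm_val hab q r (show z < n by omega),
          if_pos (show x < a by omega), if_pos h3]; exact h5
    · intro x y z h1 h2 h3 h4 h5
      apply h (a + x) (a + y) (a + z) (by omega) (by omega) (by omega)
      · rw [gluedPerm_val hab q r (show a + y < n by omega),
          gluedPerm_val hab q r (show a + z < n by omega), if_neg (by omega), if_neg (by omega),
          Nat.add_sub_cancel_left, Nat.add_sub_cancel_left]
        omega
      · rw [gluedPerm_val hab q r (show a + x < n by omega),
          gluedPerm_val hab q r (show a + z < n by omega), if_neg (by omega), if_neg (by omega),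
          Nat.add_sub_cancel_left, Nat.add_sub_cancel_left]
        omega
  · rintro ⟨hq, hr⟩ x y z h1 h2 h3 h4 h5
    have hx : x < n := by omega
    have hy : y < n := by omega
    rw [gluedPerm_val hab q r hy, gluedPerm_val hab q r h3] at h4
    rw [gluedPerm_val hab q r h3, gluedPerm_val hab q r hx] at h5
    by_cases hza : z < a
    · rw [if_pos hza] at h4 h5
      rw [if_pos (show y < a by omega)] at h4
      rw [if_pos (show x < a by omega)] at h5
      exact hq x y z h1 h2 hza h4 h5
    · rw [if_neg hza] at h4 h5
      by_cases hya : y < a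
      · rw [if_pos hya] at h4
        rw [if_pos (show x < a by omega)] at h5
        have := pext_lt q (show x < a by omega)
        omega
      · rw [if_neg hya] at h4
        by_cases hxa : x < a
        · rw [if_pos hxa] at h5
          have := pext_lt q hxa
          omega
        · rw [if_neg hxa] at h5
          exact hr (x-a) (y-a) (z-a) (by omega) (by omega) (by omega) (by omega) (by omega)

lemma gluedPerm_SA {a b n : ℕ} (hab : a + b = n) (q : Equiv.Perm (Fin a))
    (r : Equiv.Perm (Fin b)) :
    StronglyAvoids312 (gluedPerm hab q r) ↔ StronglyAvoids312 q ∧ StronglyAvoids312 r := by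
  unfold StronglyAvoids312
  rw [gluedPerm_mul, gluedPerm_avoids, gluedPerm_avoids]
  tauto

/-! ### Finsets and counting -/

noncomputable instance savDecPred (n : ℕ) : DecidablePred (@StronglyAvoids312 n) :=
  Classical.decPred _

noncomputable def SAset (n : ℕ) : Finset (Equiv.Perm (Fin n)) :=
  Finset.univ.filter StronglyAvoids312

noncomputable def E0set (m : ℕ) : Finset (Equiv.Perm (Fin m)) :=
  Finset.univ.filter (fun q => StronglyAvoids312 q ∧ pext q (m-1) = 0)

noncomputable def E0card (m : ℕ) : ℕ := if m = 0 then 0 else (E0set m).card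

lemma Sav312_eq_card (n : ℕ) : Sav312 n = (SAset n).card := by
  rw [Sav312, Nat.card_eq_fintype_card, Fintype.card_subtype, SAset]

/-- the block permutation as a permutation of `Fin m` -/
def blockPermM (m j : ℕ) : Equiv.Perm (Fin m) :=
  mkPerm m (bf j (m-j)) (bg j (m-j))
    (fun i hi => by unfold bf; split_ifs <;> omega)
    (fun i hi => by unfold bg; split_ifs <;> omega)
    (fun i hi => by unfold bf bg; split_ifs <;> omega)
    (fun i hi => by unfold bf bg; split_ifs <;> omega)

lemma blockPermM_val {m j : ℕ} {i : ℕ} (hi : i < m) :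
    pext (blockPermM m j) i = bf j (m-j) i := by
  rw [pext_eq _ hi]; rfl

lemma blockPermM_SA {m j : ℕ} (hv : j ≤ m - j ∨ (j = 1 ∧ m - j = 0)) :
    StronglyAvoids312 (blockPermM m j) := by
  have hjm : j ≤ m ∨ m ≤ 1 := by omega
  constructor
  · rw [avoids_iff']
    intro a b c h1 h2 h3 h4 h5
    rw [blockPermM_val (show a < m by omega), blockPermM_val (show b < m by omega),
      blockPermM_val h3] at *
    unfold bf at h4 h5
    split_ifs at h4 h5 <;> omega
  · rw [sq_avoids_iff']
    intro a b c h1 h2 h3 h4 h5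
    have ha : a < m := by omega
    have hb : b < m := by omega
    have bfa : bf j (m-j) a < m := by unfold bf; split_ifs <;> omega
    have bfb : bf j (m-j) b < m := by unfold bf; split_ifs <;> omega
    have bfc : bf j (m-j) c < m := by unfold bf; split_ifs <;> omega
    rw [blockPermM_val hb, blockPermM_val h3] at h4
    rw [blockPermM_val h3, blockPermM_val ha] at h5
    rw [blockPermM_val bfb, blockPermM_val bfc] at h4
    rw [blockPermM_val bfc, blockPermM_val bfa] at h5
    have e1 := bf_bf (k := m - j) (by omega) (show a < j + (m-j) by omega)
    have e2 := bf_bf (k := m - j) (by omega) (show b < j + (m-j) by omega)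
    have e3 := bf_bf (k := m - j) (by omega) (show c < j + (m-j) by omega)
    rw [e2, e3] at h4
    rw [e3, e1] at h5
    split_ifs at h4 h5 <;> omega

lemma blockPermM_last {m j : ℕ} (hm : 1 ≤ m) (hj : 1 ≤ j)
    (hv : j ≤ m - j ∨ (j = 1 ∧ m - j = 0)) :
    pext (blockPermM m j) (m-1) = 0 := by
  rw [blockPermM_val (show m-1 < m by omega)]
  unfold bf; split_ifs <;> omega

lemma blockPermM_mem_E0set {m j : ℕ} (hm : 1 ≤ m) (hj : 1 ≤ j)
    (hv : j ≤ m - j ∨ (j = 1 ∧ m - j = 0)) :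
    blockPermM m j ∈ E0set m := by
  rw [E0set, Finset.mem_filter]
  exact ⟨Finset.mem_univ _, blockPermM_SA hv, blockPermM_last hm hj hv⟩

/-- The classification, at the level of permutations. -/
theorem classify_perm {m : ℕ} (hm : 1 ≤ m) (q : Equiv.Perm (Fin m))
    (h1 : StronglyAvoids312 q) (h2 : pext q (m-1) = 0) :
    ∃ j, 1 ≤ j ∧ (j ≤ m - j ∨ (j = 1 ∧ m - j = 0)) ∧ q = blockPermM m j := by
  obtain ⟨j, k, hjk, hj1, hvalid, hform⟩ := classify_nat m hm (pext q) (pext q.symm)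
    (fun i hi => pext_lt q hi)
    (fun i i' hi hi' hE => pext_inj q hi hi' hE)
    (fun v hv => ⟨pext_lt q.symm hv, pext_pext_symm q hv⟩)
    (fun a b c hab hbc hc h4 h5 => (avoids_iff' q).mp h1.1 a b c hab hbc hc h4 h5)
    (fun a b c hab hbc hc h4 h5 => (sq_avoids_iff' q).mp h1.2 a b c hab hbc hc h4 h5)
    h2
  have hk : k = m - j := by omega
  refine ⟨j, hj1, by omega, ?_⟩
  apply Equiv.ext; intro i; apply Fin.ext
  have := hform i i.2
  rw [← pext_apply, this, hk, ← blockPermM_val i.2]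
  exact pext_apply _ i

/-- count of the valid block indices -/
lemma E0card_eq (m : ℕ) (hm : 1 ≤ m) : E0card m = max 1 (m / 2) := by
  have himg : E0set m = (Finset.Icc 1 (max 1 (m/2))).image (fun j => blockPermM m j) := by
    apply Finset.ext
    intro q
    rw [Finset.mem_image]
    constructor
    · intro hq
      rw [E0set, Finset.mem_filter] at hq
      obtain ⟨j, hj1, hjv, hq⟩ := classify_perm hm q hq.2.1 hq.2.2
      exact ⟨j, Finset.mem_Icc.mpr ⟨hj1, by omega⟩, hq.symm⟩
    · rintro ⟨j, hj, rfl⟩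
      rw [Finset.mem_Icc] at hj
      exact blockPermM_mem_E0set hm (by omega) (by omega)
  have hinj2 : ∀ j ∈ Finset.Icc 1 (max 1 (m/2)), ∀ j' ∈ Finset.Icc 1 (max 1 (m/2)),
      blockPermM m j = blockPermM m j' → j = j' := by
    intro j hj j' hj' hE
    rw [Finset.mem_Icc] at hj hj'
    have h1 : pext (blockPermM m j) 0 = pext (blockPermM m j') 0 := by rw [hE]
    rw [blockPermM_val (show 0 < m by omega), blockPermM_val (show 0 < m by omega)] at h1
    unfold bf at h1
    split_ifs at h1 <;> omega
  rw [E0card, if_neg (by omega), himg, Finset.card_image_of_injOn hinj2, Nat.card_Icc]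
  omega

/-! ### Decomposition of a strongly avoiding permutation -/

lemma block_closed {n : ℕ} (p : Equiv.Perm (Fin (n+1))) (hav : Avoids312 p) {s : ℕ}
    (hs : s < n+1) (h0 : pext p s = 0) : ∀ i, i < n+1 → (pext p i ≤ s ↔ i ≤ s) := by
  have havN := (avoids_iff' p).mp hav
  have step1 : ∀ i c, i < s → s < c → c < n+1 → pext p i < pext p c := by
    intro i c h1 h2 h3
    have hc0 : pext p c ≠ 0 := by
      intro h
      have := pext_inj p h3 hs (by rw [h, h0])
      omega
    by_contra h5
    push_neg at h5
    have hne : pext p c ≠ pext p i := by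
      intro h
      have := pext_inj p h3 (by omega) h
      omega
    exact havN i s c h1 h2 h3 (by omega) (by omega)
  have fwd : ∀ i, i ≤ s → pext p i ≤ s := by
    intro i hi
    rcases eq_or_lt_of_le hi with h | h
    · rw [h, h0]; omega
    by_contra hbig
    push_neg at hbig
    have hpi : pext p i < n+1 := pext_lt p (by omega)
    have hcard : (Finset.Ioc s n).card ≤ (Finset.Ioc (pext p i) n).card := by
      apply Finset.card_le_card_of_injOn (pext p)
      · intro c hc
        simp only [Finset.mem_coe, Finset.mem_Ioc] at hc ⊢
        refine ⟨step1 i c h hc.1 (by omega), ?_⟩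
        have := pext_lt p (show c < n+1 by omega)
        omega
      · intro x hx y hy hxy
        simp only [Finset.coe_Ioc, Set.mem_Ioc] at hx hy
        exact pext_inj p (by omega) (by omega) hxy
    rw [Nat.card_Ioc, Nat.card_Ioc] at hcard
    omega
  have bwd : ∀ i, s < i → i < n+1 → s < pext p i := by
    intro i h1 h2
    by_contra h3
    push_neg at h3
    have hnotmem : i ∉ Finset.Icc 0 s := by
      simp only [Finset.mem_Icc]
      omega
    have hcard : (insert i (Finset.Icc 0 s)).card ≤ (Finset.Icc 0 s).card := by
      apply Finset.card_le_card_of_injOn (pext p)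
      · intro x hx
        simp only [Finset.mem_coe, Finset.mem_insert, Finset.mem_Icc] at hx ⊢
        rcases hx with h | h
        · subst h; omega
        · have := fwd x h.2; omega
      · intro x hx y hy hxy
        simp only [Finset.coe_insert, Set.mem_insert_iff, Finset.coe_Icc, Set.mem_Icc] at hx hy
        have hxn : x < n+1 := by rcases hx with h | h <;> omega
        have hyn : y < n+1 := by rcases hy with h | h <;> omega
        exact pext_inj p hxn hyn hxy
    rw [Finset.card_insert_of_notMem hnotmem, Nat.card_Icc] at hcard
    omega
  intro i hi
  constructor
  · intro h
    by_contra h2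
    push_neg at h2
    have := bwd i h2 hi
    omega
  · exact fwd i

/-- restriction of a permutation to an invariant initial segment -/
noncomputable def cutLow {m : ℕ} (a : ℕ) (p : Equiv.Perm (Fin m)) : Equiv.Perm (Fin a) :=
  if h : (∀ i, i < a → pext p i < a) ∧ (∀ i, i < a → pext p.symm i < a) ∧ a ≤ m
  then mkPerm a (pext p) (pext p.symm) h.1 h.2.1
        (fun i hi => pext_symm_pext p (lt_of_lt_of_le hi h.2.2))
        (fun i hi => pext_pext_symm p (lt_of_lt_of_le hi h.2.2))
  else 1

lemma cutLow_val {m : ℕ} {a : ℕ} {p : Equiv.Perm (Fin m)}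
    (h : (∀ i, i < a → pext p i < a) ∧ (∀ i, i < a → pext p.symm i < a) ∧ a ≤ m)
    {i : ℕ} (hi : i < a) : pext (cutLow a p) i = pext p i := by
  rw [cutLow, dif_pos h, pext_eq _ hi]
  rfl

/-- restriction of a permutation to an invariant final segment, shifted down -/
noncomputable def cutHigh {m : ℕ} (a b : ℕ) (p : Equiv.Perm (Fin m)) : Equiv.Perm (Fin b) :=
  if h : (∀ i, i < b → a + i < m ∧ a ≤ pext p (a+i) ∧ pext p (a+i) < a + b)
       ∧ (∀ i, i < b → a + i < m ∧ a ≤ pext p.symm (a+i) ∧ pext p.symm (a+i) < a + b)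
  then mkPerm b (fun i => pext p (a+i) - a) (fun i => pext p.symm (a+i) - a)
       (fun i hi => by have := h.1 i hi; omega)
       (fun i hi => by have := h.2 i hi; omega)
       (fun i hi => by
          have h1 := h.1 i hi
          have h2 : a + (pext p (a+i) - a) = pext p (a+i) := by omega
          rw [h2, pext_symm_pext p h1.1]
          omega)
       (fun i hi => by
          have h1 := h.2 i hi
          have h2 : a + (pext p.symm (a+i) - a) = pext p.symm (a+i) := by omega
          rw [h2, pext_pext_symm p h1.1]
          omega)
  else 1

lemma cutHigh_val {m : ℕ} {a b : ℕ} {p : Equiv.Perm (Fin m)}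
    (h : (∀ i, i < b → a + i < m ∧ a ≤ pext p (a+i) ∧ pext p (a+i) < a + b)
       ∧ (∀ i, i < b → a + i < m ∧ a ≤ pext p.symm (a+i) ∧ pext p.symm (a+i) < a + b))
    {i : ℕ} (hi : i < b) : pext (cutHigh a b p) i = pext p (a+i) - a := by
  rw [cutHigh, dif_pos h, pext_eq _ hi]
  rfl

lemma fiber_card {n : ℕ} (s : ℕ) (hs : s < n+1) :
    ((SAset (n+1)).filter (fun p => pext p.symm 0 = s)).card
      = ((E0set (s+1)) ×ˢ (SAset (n-s))).card := by
  have hab : (s+1) + (n-s) = n+1 := by omega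
  have main : ∀ p ∈ (SAset (n+1)).filter (fun p => pext p.symm 0 = s),
      ((∀ i, i < s+1 → pext p i < s+1) ∧ (∀ i, i < s+1 → pext p.symm i < s+1) ∧ s+1 ≤ n+1)
      ∧ ((∀ i, i < n-s → (s+1) + i < n+1 ∧ (s+1) ≤ pext p ((s+1)+i) ∧ pext p ((s+1)+i) < (s+1) + (n-s))
       ∧ (∀ i, i < n-s → (s+1) + i < n+1 ∧ (s+1) ≤ pext p.symm ((s+1)+i) ∧ pext p.symm ((s+1)+i) < (s+1) + (n-s))) := by
    intro p hp
    rw [Finset.mem_filter, SAset, Finset.mem_filter] at hp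
    obtain ⟨⟨-, hSA⟩, hsymm0⟩ := hp
    have h0 : pext p s = 0 := by
      conv_lhs => rw [← hsymm0]
      exact pext_pext_symm p (by omega)
    have hiff := block_closed p hSA.1 hs h0
    have hiff' : ∀ i, i < n+1 → (pext p.symm i ≤ s ↔ i ≤ s) := by
      intro i hi
      constructor
      · intro h
        have h2 := (hiff (pext p.symm i) (pext_lt p.symm hi)).2 h
        rwa [pext_pext_symm p hi] at h2
      · intro h
        have h2 := (hiff (pext p.symm i) (pext_lt p.symm hi)).1
        rw [pext_pext_symm p hi] at h2
        exact h2 h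
    refine ⟨⟨?_, ?_, by omega⟩, ?_, ?_⟩
    · intro i hi
      have := (hiff i (by omega)).2 (by omega)
      omega
    · intro i hi
      have := (hiff' i (by omega)).2 (by omega)
      omega
    · intro i hi
      have h1 := (hiff ((s+1)+i) (by omega)).1
      have h2 := pext_lt p (show (s+1)+i < n+1 by omega)
      refine ⟨by omega, by omega, by omega⟩
    · intro i hi
      have h1 := (hiff' ((s+1)+i) (by omega)).1
      have h2 := pext_lt p.symm (show (s+1)+i < n+1 by omega)
      refine ⟨by omega, by omega, by omega⟩
  have glue_cut : ∀ p ∈ (SAset (n+1)).filter (fun p => pext p.symm 0 = s),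
      gluedPerm hab (cutLow (s+1) p) (cutHigh (s+1) (n-s) p) = p := by
    intro p hp
    obtain ⟨hL, hH⟩ := main p hp
    apply Equiv.ext; intro i; apply Fin.ext
    rw [← pext_apply, ← pext_apply]
    rw [gluedPerm_val hab _ _ i.2]
    split_ifs with h
    · rw [cutLow_val hL h]
    · rw [cutHigh_val hH (show (i:ℕ) - (s+1) < n-s by omega)]
      have h2 := (hH.1 ((i:ℕ) - (s+1)) (by omega)).2.1
      rw [show (s+1) + ((i:ℕ) - (s+1)) = (i:ℕ) by omega] at h2 ⊢
      omega
  apply Finset.card_bij'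
    (i := fun p _ => (cutLow (s+1) p, cutHigh (s+1) (n-s) p))
    (j := fun qr _ => gluedPerm hab qr.1 qr.2)
  · intro p hp
    obtain ⟨hL, hH⟩ := main p hp
    have hglue := glue_cut p hp
    rw [Finset.mem_filter, SAset, Finset.mem_filter] at hp
    obtain ⟨⟨-, hSA⟩, hsymm0⟩ := hp
    have hSAsplit : StronglyAvoids312 (cutLow (s+1) p) ∧ StronglyAvoids312 (cutHigh (s+1) (n-s) p) := by
      rw [← gluedPerm_SA hab, hglue]
      exact hSA
    rw [Finset.mem_product]
    constructor
    · rw [E0set, Finset.mem_filter]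
      refine ⟨Finset.mem_univ _, hSAsplit.1, ?_⟩
      rw [show (s+1) - 1 = s by omega, cutLow_val hL (by omega)]
      conv_lhs => rw [← hsymm0]
      exact pext_pext_symm p (by omega)
    · rw [SAset, Finset.mem_filter]
      exact ⟨Finset.mem_univ _, hSAsplit.2⟩
  · intro qr hqr
    rw [Finset.mem_product, E0set, SAset, Finset.mem_filter, Finset.mem_filter] at hqr
    obtain ⟨⟨-, hq, hq0⟩, -, hr⟩ := hqr
    rw [Finset.mem_filter, SAset, Finset.mem_filter]
    refine ⟨⟨Finset.mem_univ _, ?_⟩, ?_⟩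
    · rw [gluedPerm_SA hab]
      exact ⟨hq, hr⟩
    · have h1 : pext (gluedPerm hab qr.1 qr.2) s = 0 := by
        rw [gluedPerm_val hab _ _ (by omega), if_pos (by omega)]
        rw [show (s+1) - 1 = s by omega] at hq0
        exact hq0
      conv_rhs => rw [← pext_symm_pext (gluedPerm hab qr.1 qr.2) (show s < n+1 by omega)]
      rw [h1]
  · intro p hp
    exact glue_cut p hp
  · intro qr hqr
    rw [Finset.mem_product, E0set, SAset, Finset.mem_filter, Finset.mem_filter] at hqr
    obtain ⟨⟨-, hq, hq0⟩, -, hr⟩ := hqr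
    have hmem : gluedPerm hab qr.1 qr.2 ∈ (SAset (n+1)).filter (fun p => pext p.symm 0 = s) := by
      rw [Finset.mem_filter, SAset, Finset.mem_filter]
      refine ⟨⟨Finset.mem_univ _, ?_⟩, ?_⟩
      · rw [gluedPerm_SA hab]; exact ⟨hq, hr⟩
      · have h1 : pext (gluedPerm hab qr.1 qr.2) s = 0 := by
          rw [gluedPerm_val hab _ _ (by omega), if_pos (by omega)]
          rw [show (s+1) - 1 = s by omega] at hq0
          exact hq0
        conv_rhs => rw [← pext_symm_pext (gluedPerm hab qr.1 qr.2) (show s < n+1 by omega)]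
        rw [h1]
    obtain ⟨hL, hH⟩ := main _ hmem
    ext : 1
    · apply Equiv.ext; intro i; apply Fin.ext
      rw [← pext_apply, cutLow_val hL i.2, gluedPerm_val hab _ _ (by omega), if_pos i.2,
        pext_apply]
    · apply Equiv.ext; intro i; apply Fin.ext
      rw [← pext_apply, cutHigh_val hH i.2, gluedPerm_val hab _ _ (by omega :(s+1)+(i:ℕ) < n+1),
        if_neg (by omega), Nat.add_sub_cancel_left, Nat.add_sub_cancel_left, pext_apply]

theorem Sav312_conv (n : ℕ) :
    Sav312 (n+1) = ∑ s ∈ Finset.range (n+1), E0card (s+1) * Sav312 (n - s) := by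
  rw [Sav312_eq_card]
  rw [Finset.card_eq_sum_card_fiberwise
    (f := fun p => pext p.symm 0) (t := Finset.range (n+1))
    (fun p _ => Finset.mem_range.mpr (pext_lt p.symm (by omega)))]
  apply Finset.sum_congr rfl
  intro s hsr
  rw [Finset.mem_range] at hsr
  rw [E0card, if_neg (by omega), Sav312_eq_card, ← Finset.card_product]
  exact fiber_card s hsr

/-! ### Initial values -/

lemma sav_zero : Sav312 0 = 1 := by
  rw [Sav312_eq_card, SAset]
  rw [Finset.filter_true_of_mem (fun p _ => ⟨fun ⟨a, _⟩ => a.elim0, fun ⟨a, _⟩ => a.elim0⟩)]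
  rw [Finset.card_univ]
  simp

lemma E0card_vals : E0card 0 = 0 ∧ E0card 1 = 1 ∧ E0card 2 = 1 ∧ E0card 3 = 1 ∧
    E0card 4 = 2 ∧ E0card 5 = 2 ∧ E0card 6 = 3 := by
  refine ⟨rfl, ?_, ?_, ?_, ?_, ?_, ?_⟩ <;>
    rw [E0card_eq _ (by norm_num)] <;> norm_num

lemma sav_vals : Sav312 1 = 1 ∧ Sav312 2 = 2 ∧ Sav312 3 = 4 ∧ Sav312 4 = 9 ∧
    Sav312 5 = 19 ∧ Sav312 6 = 41 := by
  obtain ⟨e0, e1, e2, e3, e4, e5, e6⟩ := E0card_vals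
  have h1 : Sav312 1 = 1 := by
    rw [show (1:ℕ) = 0+1 from rfl, Sav312_conv]
    simp only [Finset.sum_range_succ, Finset.sum_range_zero]
    norm_num [e1, sav_zero]
  have h2 : Sav312 2 = 2 := by
    rw [show (2:ℕ) = 1+1 from rfl, Sav312_conv]
    simp only [Finset.sum_range_succ, Finset.sum_range_zero]
    norm_num [e1, e2, sav_zero, h1]
  have h3 : Sav312 3 = 4 := by
    rw [show (3:ℕ) = 2+1 from rfl, Sav312_conv]
    simp only [Finset.sum_range_succ, Finset.sum_range_zero]
    norm_num [e1, e2, e3, sav_zero, h1, h2]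
  have h4 : Sav312 4 = 9 := by
    rw [show (4:ℕ) = 3+1 from rfl, Sav312_conv]
    simp only [Finset.sum_range_succ, Finset.sum_range_zero]
    norm_num [e1, e2, e3, e4, sav_zero, h1, h2, h3]
  have h5 : Sav312 5 = 19 := by
    rw [show (5:ℕ) = 4+1 from rfl, Sav312_conv]
    simp only [Finset.sum_range_succ, Finset.sum_range_zero]
    norm_num [e1, e2, e3, e4, e5, sav_zero, h1, h2, h3, h4]
  have h6 : Sav312 6 = 41 := by
    rw [show (6:ℕ) = 5+1 from rfl, Sav312_conv]
    simp only [Finset.sum_range_succ, Finset.sum_range_zero]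
    norm_num [e1, e2, e3, e4, e5, e6, sav_zero, h1, h2, h3, h4, h5]
  exact ⟨h1, h2, h3, h4, h5, h6⟩

/-! ### Power series -/

open PowerSeries

noncomputable def Fq : PowerSeries ℚ := PowerSeries.mk fun n => (Sav312 n : ℚ)
noncomputable def Bq : PowerSeries ℚ := PowerSeries.mk fun m => (E0card m : ℚ)

lemma FBF : Fq = 1 + Bq * Fq := by
  apply PowerSeries.ext
  intro n
  rw [map_add, PowerSeries.coeff_mul, Finset.Nat.sum_antidiagonal_eq_sum_range_succ_mk]
  simp only [Fq, Bq, PowerSeries.coeff_mk]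
  cases n with
  | zero =>
    simp only [Finset.sum_range_one, PowerSeries.coeff_zero_eq_constantCoeff, map_one]
    rw [E0card, if_pos rfl, sav_zero]
    norm_num
  | succ n =>
    rw [PowerSeries.coeff_one, if_neg (Nat.succ_ne_zero n)]
    rw [Finset.sum_range_succ']
    have hE0 : ((E0card 0 : ℚ)) = 0 := by rw [E0card, if_pos rfl]; norm_num
    rw [hE0, zero_mul, add_zero, zero_add]
    have hconv := Sav312_conv n
    have hcast : ((Sav312 (n+1) : ℚ)) = ∑ s ∈ Finset.range (n+1), (E0card (s+1) : ℚ) * (Sav312 (n-s) : ℚ) := by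
      rw [hconv]
      push_cast
      rfl
    rw [hcast]
    apply Finset.sum_congr rfl
    intro i hi
    have he : n + 1 - (i + 1) = n - i := by omega
    rw [he]

lemma Ekey (n : ℕ) (hn : 5 ≤ n) :
    E0card n + E0card (n-3) = E0card (n-1) + E0card (n-2) := by
  rw [E0card_eq n (by omega), E0card_eq (n-1) (by omega), E0card_eq (n-2) (by omega),
    E0card_eq (n-3) (by omega)]
  omega

lemma geom_key :
    Bq * (-(X^3) + X^2 + X - 1 : PowerSeries ℚ) = (-(X^4) + X^3 - X : PowerSeries ℚ) := by
  apply PowerSeries.ext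
  intro n
  have hX : (X : PowerSeries ℚ) = X^1 := (pow_one X).symm
  rw [show (-(X^3) + X^2 + X - 1 : PowerSeries ℚ) = -(X^3) + X^2 + X^1 - 1 by rw [← hX]]
  rw [mul_sub, mul_add, mul_add, mul_neg, mul_one]
  rw [map_sub, map_add, map_add, map_neg]
  rw [PowerSeries.coeff_mul_X_pow', PowerSeries.coeff_mul_X_pow', PowerSeries.coeff_mul_X_pow']
  rw [map_sub, map_add, map_neg, PowerSeries.coeff_X_pow, PowerSeries.coeff_X_pow]
  rw [show (X : PowerSeries ℚ) = X^1 from hX, PowerSeries.coeff_X_pow]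
  simp only [Bq, PowerSeries.coeff_mk]
  obtain ⟨e0, e1, e2, e3, e4, e5, e6⟩ := E0card_vals
  match n with
  | 0 => norm_num [e0]
  | 1 => norm_num [e0, e1]
  | 2 => norm_num [e0, e1, e2]
  | 3 => norm_num [e0, e1, e2, e3]
  | 4 => norm_num [e1, e2, e3, e4]
  | (n+5) =>
    have hk := Ekey (n+5) (by omega)
    rw [if_pos (by omega), if_pos (by omega), if_pos (by omega),
      if_neg (by omega), if_neg (by omega), if_neg (by omega)]
    have hs1 : (n+5) - 3 = n+2 := by omega
    have hs2 : (n+5) - 2 = n+3 := by omega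
    have hs3 : (n+5) - 1 = n+4 := by omega
    rw [hs1, hs2, hs3]
    rw [hs1, hs2, hs3] at hk
    have hcast : ((E0card (n+5) : ℚ)) + E0card (n+2) = E0card (n+4) + E0card (n+3) := by
      exact_mod_cast congrArg (Nat.cast : ℕ → ℚ) hk
    linarith

theorem main_ps :
    Fq * (X^4 - 2*X^3 + X^2 + 2*X - 1 : PowerSeries ℚ) = (-(X^3) + X^2 + X - 1 : PowerSeries ℚ) := by
  have h1 : Fq * (1 - Bq) = 1 := by
    have h := FBF
    have : Fq - Bq * Fq = 1 := by
      nth_rewrite 1 [h]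
      ring
    calc Fq * (1 - Bq) = Fq - Bq * Fq := by ring
      _ = 1 := this
  have h2 : ((1 : PowerSeries ℚ) - Bq) * (-(X^3) + X^2 + X - 1) = (X^4 - 2*X^3 + X^2 + 2*X - 1) := by
    rw [sub_mul, one_mul, geom_key]
    ring
  calc Fq * (X^4 - 2*X^3 + X^2 + 2*X - 1 : PowerSeries ℚ)
      = Fq * ((1 - Bq) * (-(X^3) + X^2 + X - 1)) := by rw [h2]
    _ = (Fq * (1 - Bq)) * (-(X^3) + X^2 + X - 1) := by ring
    _ = -(X^3) + X^2 + X - 1 := by rw [h1, one_mul]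

lemma sav_rec (n : ℕ) (hn : 4 ≤ n) :
    Sav312 n + 2 * Sav312 (n-3) = 2 * Sav312 (n-1) + Sav312 (n-2) + Sav312 (n-4) := by
  have h := congrArg (PowerSeries.coeff n) main_ps
  rw [show Fq * (X^4 - 2*X^3 + X^2 + 2*X - 1 : PowerSeries ℚ)
      = (Fq*X^4) - ((Fq*X^3) + (Fq*X^3)) + (Fq*X^2) + ((Fq*X^1) + (Fq*X^1)) - Fq by ring] at h
  rw [show (-(X^3) + X^2 + X - 1 : PowerSeries ℚ) = -(X^3) + X^2 + X^1 - 1 by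
    rw [pow_one]] at h
  rw [map_sub, map_add, map_add, map_sub, map_add, map_add] at h
  rw [map_sub, map_add, map_add, map_neg] at h
  rw [PowerSeries.coeff_mul_X_pow', PowerSeries.coeff_mul_X_pow',
    PowerSeries.coeff_mul_X_pow', PowerSeries.coeff_mul_X_pow'] at h
  rw [PowerSeries.coeff_X_pow, PowerSeries.coeff_X_pow, PowerSeries.coeff_X_pow,
    PowerSeries.coeff_one] at h
  rw [if_pos (show 4 ≤ n by omega), if_pos (show 3 ≤ n by omega),
    if_pos (show 2 ≤ n by omega), if_pos (show 1 ≤ n by omega),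
    if_neg (show ¬ n = 3 by omega), if_neg (show ¬ n = 2 by omega),
    if_neg (show ¬ n = 1 by omega), if_neg (show ¬ n = 0 by omega)] at h
  simp only [Fq, PowerSeries.coeff_mk] at h
  have h2 : ((Sav312 n + 2 * Sav312 (n-3) : ℕ) : ℚ)
      = ((2 * Sav312 (n-1) + Sav312 (n-2) + Sav312 (n-4) : ℕ) : ℚ) := by
    push_cast
    linarith
  exact_mod_cast h2

end SavAux

open PowerSeries in
/-- The generating function for Sav_n(312) is (-z³+z²+z-1)/(z⁴-2z³+z²+2z-1); equivalently
the sequence satisfies the corresponding linear recurrence with initial values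
1, 1, 2, 4, 9, 19, 41. -/
theorem sav312_generating_function :
    (PowerSeries.mk fun n => (Sav312 n : ℚ)) * (X ^ 4 - 2 * X ^ 3 + X ^ 2 + 2 * X - 1)
      = -X ^ 3 + X ^ 2 + X - 1 ∧
    Sav312 0 = 1 ∧ Sav312 1 = 1 ∧ Sav312 2 = 2 ∧ Sav312 3 = 4 ∧
    Sav312 4 = 9 ∧ Sav312 5 = 19 ∧ Sav312 6 = 41 ∧
    ∀ n : ℕ, 4 ≤ n →
      Sav312 n + 2 * Sav312 (n - 3) =
        2 * Sav312 (n - 1) + Sav312 (n - 2) + Sav312 (n - 4) := by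
  obtain ⟨h1, h2, h3, h4, h5, h6⟩ := SavAux.sav_vals
  refine ⟨?_, SavAux.sav_zero, h1, h2, h3, h4, h5, h6, fun n hn => SavAux.sav_rec n hn⟩
  have hps := SavAux.main_ps
  rw [SavAux.Fq] at hps
  convert hps using 2 <;> ring
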